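/- arXiv:1511.05466 — 9 statements merged into one kernel-verified Lean document; each statement's English description precedes it below -/
import Mathlib

section
/- Assume D is barreled (the paper assumes D complete and reflexive; reflexive locally convex spaces are barreled). A sequence (ζ_n)_{n≥1} of elements of D^× is Bessel-like if and only if Σ_{k=1}^∞ |ζ_k(η)|² < ∞ for every η ∈ D and the analysis operator F : D → ℓ², F η := (conj(ζ_k(η)))_{k≥1}, is a continuous linear map from D[t] into ℓ². -/
open Filter Topology
open scoped ENNReal

noncomputable section

/-- A sequence `ζ` in the conjugate dual `D^×` is Bessel-like if on every von Neumann bounded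
subset `M` of `D` the quantities `Σ_k |ζ k η|²` are uniformly bounded. -/
def BesselLike {D : Type*} [AddCommGroup D] [Module ℂ D] [TopologicalSpace D]
    (ζ : ℕ → (D →SL[starRingEnd ℂ] ℂ)) : Prop :=
  ∀ M : Set D, Bornology.IsVonNBounded ℂ M →
    ∃ γ : ℝ, ∀ η ∈ M, ∀ N : ℕ, ∑ k ∈ Finset.range N, ‖ζ k η‖ ^ 2 ≤ γ

lemma two_toReal_aux : ((2 : ℝ≥0∞)).toReal = 2 := by norm_num

lemma rpow_two_toReal (x : ℝ) : x ^ ((2 : ℝ≥0∞)).toReal = x ^ 2 := by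
  rw [two_toReal_aux, Real.rpow_two]

lemma lp_single_add (k : ℕ) (a b : ℂ) :
    lp.single (E := fun _ : ℕ => ℂ) 2 k (a + b) =
      lp.single (E := fun _ : ℕ => ℂ) 2 k a + lp.single (E := fun _ : ℕ => ℂ) 2 k b := by
  apply lp.ext
  funext j
  by_cases h : j = k
  · subst h
    simp [lp.single_apply_self]
  · simp [lp.single_apply_ne _ _ _ h]

/-- `lp.single` as a linear map `ℂ →ₗ[ℂ] ℓ²`. -/
def singleLM (k : ℕ) : ℂ →ₗ[ℂ] lp (fun _ : ℕ => ℂ) 2 where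
  toFun a := lp.single 2 k a
  map_add' a b := by
    apply lp.ext
    funext j
    by_cases h : j = k
    · subst h; simp [lp.single_apply_self]
    · simp [lp.single_apply_ne _ _ _ h]
  map_smul' c a := by
    apply lp.ext
    funext j
    by_cases h : j = k
    · subst h; simp [lp.single_apply_self]
    · simp [lp.single_apply_ne _ _ _ h, Pi.single_apply, h]

/-- `lp.single` as a continuous linear map `ℂ →L[ℂ] ℓ²`. -/
def singleCLM (k : ℕ) : ℂ →L[ℂ] lp (fun _ : ℕ => ℂ) 2 :=
  LinearMap.mkContinuous (singleLM k) 1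
    (fun a => by
      rw [one_mul]
      exact le_of_eq (lp.norm_single (p := 2) (E := fun _ : ℕ => ℂ) (by norm_num) k a))

/-- The `k`-th coordinate map `η ↦ lp.single 2 k (conj (ζ k η))` as a continuous linear map. -/
def coordCLM {D : Type*} [AddCommGroup D] [Module ℂ D] [TopologicalSpace D]
    (ζ : ℕ → (D →SL[starRingEnd ℂ] ℂ)) (k : ℕ) : D →L[ℂ] lp (fun _ : ℕ => ℂ) 2 where
  toFun := fun η => lp.single 2 k (starRingEnd ℂ (ζ k η))
  map_add' x y := by
    apply lp.ext
    funext j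
    by_cases h : j = k
    · subst h; simp [lp.single_apply_self]
    · simp [lp.single_apply_ne _ _ _ h]
  map_smul' c x := by
    apply lp.ext
    funext j
    by_cases h : j = k
    · subst h
      simp [lp.single_apply_self, ContinuousLinearMap.map_smulₛₗ, map_mul, smul_eq_mul]
    · simp [lp.single_apply_ne _ _ _ h, Pi.single_apply, h]
  cont := (singleCLM k).continuous.comp (continuous_star.comp (ζ k).continuous)

/-- Proposition 2.10 (`prop_210`) of Bellomonte–Trapani: for `D` barreled (the paper assumes `D`
complete and reflexive), a sequence `ζ ⊂ D^×` is Bessel-like if and only if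
`Σ_k |ζ k η|² < ∞` for every `η ∈ D` and the analysis operator
`F : η ↦ (conj (ζ k η))_k` is a continuous linear map from `D[t]` into `ℓ²`. -/
theorem statement5 {D : Type*} [AddCommGroup D] [Module ℂ D] [Module ℝ D] [IsScalarTower ℝ ℂ D]
    [TopologicalSpace D] [IsTopologicalAddGroup D] [ContinuousSMul ℂ D] [T2Space D]
    [LocallyConvexSpace ℝ D] [BarrelledSpace ℂ D]
    (ζ : ℕ → (D →SL[starRingEnd ℂ] ℂ)) :
    BesselLike ζ ↔
      ((∀ η : D, Summable fun k => ‖ζ k η‖ ^ 2) ∧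
        ∃ F : D →L[ℂ] lp (fun _ : ℕ => ℂ) 2, ∀ (η : D) (k : ℕ),
          (F η) k = starRingEnd ℂ (ζ k η)) := by
  letI : UniformSpace D := IsTopologicalAddGroup.rightUniformSpace D
  haveI : IsUniformAddGroup D := isUniformAddGroup_of_addCommGroup
  constructor
  · intro h
    have hsum : ∀ η : D, Summable fun k => ‖ζ k η‖ ^ 2 := by
      intro η
      obtain ⟨γ, hγ⟩ := h {η} (Bornology.isVonNBounded_singleton η)
      exact summable_of_sum_range_le (fun k => by positivity)
        (fun N => hγ η rfl N)
    refine ⟨hsum, ?_⟩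
    have hmem : ∀ η : D, Memℓp (fun k : ℕ => starRingEnd ℂ (ζ k η)) 2 := by
      intro η
      apply memℓp_gen
      have : (fun k : ℕ => ‖starRingEnd ℂ (ζ k η)‖ ^ ((2 : ℝ≥0∞)).toReal) =
          fun k : ℕ => ‖ζ k η‖ ^ 2 := by
        funext k
        rw [rpow_two_toReal, RCLike.norm_conj]
      rw [this]
      exact hsum η
    set f : D → lp (fun _ : ℕ => ℂ) 2 := fun η => ⟨_, hmem η⟩ with hf
    set g : ℕ → D →L[ℂ] lp (fun _ : ℕ => ℂ) 2 :=
      fun N => ∑ k ∈ Finset.range N, coordCLM ζ k with hg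
    have htend : Tendsto (fun N η => g N η) atTop (𝓝 f) := by
      rw [tendsto_pi_nhds]
      intro η
      have h1 : HasSum (fun k : ℕ => lp.single 2 k ((f η) k)) (f η) :=
        lp.hasSum_single (by norm_num) (f η)
      have h2 := h1.tendsto_sum_nat
      have h3 : (fun N => ∑ k ∈ Finset.range N, lp.single 2 k ((f η) k)) =
          fun N => g N η := by
        funext N
        simp only [hg, ContinuousLinearMap.coe_sum', Finset.sum_apply]
        rfl
      rwa [h3] at h2
    refine ⟨(norm_withSeminorms ℂ (lp (fun _ : ℕ => ℂ) 2)).continuousLinearMapOfTendsto g htend,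
      ?_⟩
    intro η k
    rfl
  · rintro ⟨hsum, F, hF⟩
    intro M hM
    obtain ⟨r, hr⟩ := (NormedSpace.isVonNBounded_iff' ℂ).mp (hM.image F)
    refine ⟨r ^ 2, fun η hη N => ?_⟩
    have hFr : ‖F η‖ ≤ r := hr _ ⟨η, hη, rfl⟩
    have h1 : ∑ k ∈ Finset.range N, ‖(F η) k‖ ^ ((2 : ℝ≥0∞)).toReal ≤
        ‖F η‖ ^ ((2 : ℝ≥0∞)).toReal :=
      lp.sum_rpow_le_norm_rpow (by rw [two_toReal_aux]; norm_num) (F η) (Finset.range N)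
    have h2 : ∑ k ∈ Finset.range N, ‖ζ k η‖ ^ 2 =
        ∑ k ∈ Finset.range N, ‖(F η) k‖ ^ ((2 : ℝ≥0∞)).toReal := by
      refine Finset.sum_congr rfl fun k _ => ?_
      rw [rpow_two_toReal, hF η k, RCLike.norm_conj]
    rw [h2]
    refine h1.trans ?_
    rw [rpow_two_toReal]
    exact pow_le_pow_left₀ (norm_nonneg _) hFr 2
end
end

section
/- Assume the strong conjugate dual D^×[t^×] is sequentially complete (the paper assumes D complete and reflexive, which makes D^×[t^×] quasi-complete). If (ζ_n)_{n≥1} ⊂ D^× is a Bessel-like sequence and (a_n)_{n≥1} ∈ ℓ², then the series Σ_{n=1}^∞ a_n ζ_n converges in D^×[t^×], and for every von Neumann bounded subset M of D one has sup_{η∈M} |Σ_{k=1}^∞ a_k ζ_k(η)| ≤ γ_M^{1/2} ‖(a_n)‖_{ℓ²}. -/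
open Filter Topology

noncomputable section

/-- Convergence of a series (sequence of partial sums) in a topological space. -/
def SeriesTendsTo {E : Type*} [AddCommMonoid E] [TopologicalSpace E] (a : ℕ → E) (f : E) : Prop :=
  Tendsto (fun N => ∑ n ∈ Finset.range N, a n) atTop (𝓝 f)

/-- Cauchy–Schwarz type estimate for finite linear combinations of the `ζ k` evaluated at `η`. -/
lemma besselKey {D : Type*} [AddCommGroup D] [Module ℂ D] [TopologicalSpace D]
    (ζ : ℕ → (D →SL[starRingEnd ℂ] ℂ)) (a : ℕ → ℂ) (γ : ℝ) (η : D)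
    (hγ : ∀ N : ℕ, ∑ k ∈ Finset.range N, ‖ζ k η‖ ^ 2 ≤ γ) (s : Finset ℕ) :
    ‖∑ k ∈ s, (a k • ζ k) η‖ ≤ Real.sqrt (∑ k ∈ s, ‖a k‖ ^ 2) * Real.sqrt γ := by
  have hζs : ∑ k ∈ s, ‖ζ k η‖ ^ 2 ≤ γ := by
    obtain ⟨N, hsub⟩ := s.exists_nat_subset_range
    exact (Finset.sum_le_sum_of_subset_of_nonneg hsub (fun i _ _ => by positivity)).trans (hγ N)
  have hγnn : (0:ℝ) ≤ γ := by simpa using hγ 0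
  have h1 : ‖∑ k ∈ s, (a k • ζ k) η‖ ≤ ∑ k ∈ s, ‖a k‖ * ‖ζ k η‖ := by
    refine (norm_sum_le _ _).trans (le_of_eq ?_)
    refine Finset.sum_congr rfl fun k _ => ?_
    simp [norm_smul]
  refine h1.trans ?_
  rw [← Real.sqrt_mul (by positivity)]
  rw [Real.le_sqrt (by positivity) (mul_nonneg (by positivity) hγnn)]
  calc (∑ k ∈ s, ‖a k‖ * ‖ζ k η‖) ^ 2
      ≤ (∑ k ∈ s, ‖a k‖ ^ 2) * ∑ k ∈ s, ‖ζ k η‖ ^ 2 :=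
        Finset.sum_mul_sq_le_sq_mul_sq s _ _
    _ ≤ (∑ k ∈ s, ‖a k‖ ^ 2) * γ := by
        refine mul_le_mul_of_nonneg_left hζs (by positivity)

/-- From the proof of Proposition 2.10 of Bellomonte–Trapani: if the strong conjugate dual
`D^× [t^×]` (here: the space `D →SL[conj] ℂ` with its topology of uniform convergence on von
Neumann bounded sets) is sequentially complete, `ζ ⊂ D^×` is Bessel-like and `(a_n) ∈ ℓ²`, then
`Σ_n a_n ζ_n` converges in `D^×[t^×]`, and for every von Neumann bounded `M ⊆ D` (with bound
`γ` for `Σ_k |ζ k η|²` on `M`) one has `sup_{η ∈ M} |Σ_k a_k ζ_k(η)| ≤ γ^{1/2} ‖a‖_{ℓ²}`. -/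
theorem statement6 {D : Type*} [AddCommGroup D] [Module ℂ D] [Module ℝ D] [IsScalarTower ℝ ℂ D]
    [TopologicalSpace D] [IsTopologicalAddGroup D] [ContinuousSMul ℂ D] [T2Space D]
    [LocallyConvexSpace ℝ D]
    (hseqcompl : ∀ u : ℕ → (D →SL[starRingEnd ℂ] ℂ), CauchySeq u → ∃ L, Tendsto u atTop (𝓝 L))
    (ζ : ℕ → (D →SL[starRingEnd ℂ] ℂ)) (hζ : BesselLike ζ)
    (a : ℕ → ℂ) (ha : Summable fun n => ‖a n‖ ^ 2) :
    ∃ L : D →SL[starRingEnd ℂ] ℂ,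
      SeriesTendsTo (fun n => a n • ζ n) L ∧
      ∀ M : Set D, Bornology.IsVonNBounded ℂ M →
        ∀ γ : ℝ, (∀ η ∈ M, ∀ N : ℕ, ∑ k ∈ Finset.range N, ‖ζ k η‖ ^ 2 ≤ γ) →
          ∀ η ∈ M, ‖L η‖ ≤ Real.sqrt γ * Real.sqrt (∑' n, ‖a n‖ ^ 2) := by
  set u : ℕ → (D →SL[starRingEnd ℂ] ℂ) := fun N => ∑ n ∈ Finset.range N, a n • ζ n with hu
  have huapp : ∀ (N : ℕ) (η : D), u N η = ∑ k ∈ Finset.range N, (a k • ζ k) η := by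
    intro N η
    simp [hu]
  have hcs : CauchySeq u := by
    rw [cauchySeq_iff_tendsto, uniformity_eq_comap_nhds_zero, tendsto_comap_iff]
    rw [ContinuousLinearMap.hasBasis_nhds_zero.tendsto_right_iff]
    rintro ⟨M, V⟩ ⟨hM, hV⟩
    obtain ⟨ε, hε, hball⟩ := Metric.mem_nhds_iff.1 hV
    obtain ⟨γ0, hγ0⟩ := hζ M hM
    set γ : ℝ := max γ0 0 with hγdef
    have hγM : ∀ η ∈ M, ∀ N : ℕ, ∑ k ∈ Finset.range N, ‖ζ k η‖ ^ 2 ≤ γ :=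
      fun η hη N => (hγ0 η hη N).trans (le_max_left _ _)
    have hγnn : (0 : ℝ) ≤ γ := le_max_right _ _
    set δ : ℝ := (ε / (Real.sqrt γ + 1)) ^ 2 with hδdef
    have hδpos : 0 < δ := by positivity
    obtain ⟨s, hs⟩ := summable_iff_vanishing.1 ha (Metric.ball 0 δ) (Metric.ball_mem_nhds 0 hδpos)
    obtain ⟨N, hsN⟩ := s.exists_nat_subset_range
    -- the key estimate for m ≤ n, both ≥ N
    have hdiff : ∀ m n : ℕ, N ≤ m → m ≤ n → ∀ η ∈ M, ‖u n η - u m η‖ < ε := by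
      intro m n hNm hmn η hη
      have hIco : u n η - u m η = ∑ k ∈ Finset.Ico m n, (a k • ζ k) η := by
        rw [huapp, huapp, Finset.sum_Ico_eq_sub _ hmn]
      have hdisj : Disjoint (Finset.Ico m n) s := by
        rw [Finset.disjoint_left]
        intro k hk hks
        have h1 : m ≤ k := (Finset.mem_Ico.1 hk).1
        have h2 : k < N := Finset.mem_range.1 (hsN hks)
        omega
      have hsum : ∑ k ∈ Finset.Ico m n, ‖a k‖ ^ 2 < δ := by
        have := hs (Finset.Ico m n) hdisj
        rw [Metric.mem_ball, Real.dist_0_eq_abs] at this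
        exact (le_abs_self _).trans_lt this
      have hkey := besselKey ζ a γ η (hγM η hη) (Finset.Ico m n)
      rw [hIco]
      refine hkey.trans_lt ?_
      have h1 : Real.sqrt (∑ k ∈ Finset.Ico m n, ‖a k‖ ^ 2) ≤ ε / (Real.sqrt γ + 1) := by
        have := Real.sqrt_le_sqrt hsum.le
        rwa [hδdef, Real.sqrt_sq (by positivity)] at this
      have h2 : Real.sqrt (∑ k ∈ Finset.Ico m n, ‖a k‖ ^ 2) * Real.sqrt γ
          ≤ (ε / (Real.sqrt γ + 1)) * Real.sqrt γ :=
        mul_le_mul_of_nonneg_right h1 (Real.sqrt_nonneg _)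
      refine h2.trans_lt ?_
      rw [div_mul_eq_mul_div, div_lt_iff₀ (by positivity)]
      nlinarith [Real.sqrt_nonneg γ, hε]
    refine eventually_atTop.2 ⟨(N, N), ?_⟩
    rintro ⟨m, n⟩ ⟨hm, hn⟩
    intro η hη
    refine hball ?_
    rw [mem_ball_zero_iff]
    simp only [Function.comp_apply, Prod.map_apply, ContinuousLinearMap.sub_apply]
    rcases le_total m n with h | h
    · exact hdiff m n hm h η hη
    · rw [norm_sub_rev]
      exact hdiff n m hn h η hη
  obtain ⟨L, hL⟩ := hseqcompl u hcs
  refine ⟨L, hL, ?_⟩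
  intro M hM γ hγ η hη
  have hγnn : (0 : ℝ) ≤ γ := by
    have := hγ η hη 0
    simpa using this
  have hpt : Tendsto (fun n => u n η) atTop (𝓝 (L η)) := hL.eval_const η
  refine le_of_tendsto' hpt.norm ?_
  intro n
  rw [huapp]
  refine (besselKey ζ a γ η (hγ η hη) (Finset.range n)).trans ?_
  rw [mul_comm]
  refine mul_le_mul_of_nonneg_left ?_ (Real.sqrt_nonneg _)
  exact Real.sqrt_le_sqrt (Summable.sum_le_tsum _ (fun i _ => by positivity) ha)
end
end

section
/- Assume the strong conjugate dual D^×[t^×] is sequentially complete (the paper assumes D complete and reflexive). A sequence (ζ_n)_{n≥1} of elements of D^× is Bessel-like if and only if, for every orthonormal basis (e_n)_{n≥1} of H, there exists a continuous linear map W : H → D^×[t^×] such that W e_n = ζ_n for every n ≥ 1. -/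
open Filter Topology Bornology
open scoped Uniformity

noncomputable section

/-- A sequence in an inner product space is an orthonormal basis (sequence) if it is orthonormal
and has dense linear span. -/
def IsONBasisSeq {K : Type*} [NormedAddCommGroup K] [InnerProductSpace ℂ K] (e : ℕ → K) : Prop :=
  Orthonormal ℂ e ∧ Dense ((Submodule.span ℂ (Set.range e) : Submodule ℂ K) : Set K)

section Aux

variable {D : Type*} [AddCommGroup D] [Module ℂ D] [TopologicalSpace D]
  [IsTopologicalAddGroup D] [ContinuousSMul ℂ D]

private lemma dual_basis :
    (𝓝 (0 : D →SL[starRingEnd ℂ] ℂ)).HasBasis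
      (fun SV : Set D × Set ℂ => IsVonNBounded ℂ SV.1 ∧ SV.2 ∈ (𝓝 (0 : ℂ)))
      (fun SV => { f : D →SL[starRingEnd ℂ] ℂ | ∀ x ∈ SV.1, f x ∈ SV.2 }) :=
  ContinuousLinearMap.hasBasis_nhds_zero

private lemma cauchy_crit {u : ℕ → (D →SL[starRingEnd ℂ] ℂ)}
    (h : ∀ M : Set D, IsVonNBounded ℂ M → ∀ ε : ℝ, 0 < ε →
      ∃ N, ∀ m, N ≤ m → ∀ n, N ≤ n → ∀ η ∈ M, ‖u m η - u n η‖ < ε) :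
    CauchySeq u := by
  have hb := (dual_basis (D := D)).comap
    (fun p : (D →SL[starRingEnd ℂ] ℂ) × (D →SL[starRingEnd ℂ] ℂ) => p.2 - p.1)
  rw [← uniformity_eq_comap_nhds_zero] at hb
  rw [hb.cauchySeq_iff]
  rintro ⟨M, U⟩ ⟨hM, hU⟩
  obtain ⟨ε, hε, hball⟩ := Metric.mem_nhds_iff.mp hU
  obtain ⟨N, hN⟩ := h M hM ε hε
  refine ⟨N, fun m hm n hn => ?_⟩
  simp only [Set.mem_preimage, Set.mem_setOf_eq]
  intro η hη
  apply hball
  rw [mem_ball_zero_iff]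
  simpa using hN n hn m hm η hη

set_option maxHeartbeats 1000000 in
private lemma forward {H : Type*} [NormedAddCommGroup H] [InnerProductSpace ℂ H]
    (hseqcompl : ∀ u : ℕ → (D →SL[starRingEnd ℂ] ℂ), CauchySeq u → ∃ L, Tendsto u atTop (𝓝 L))
    {ζ : ℕ → (D →SL[starRingEnd ℂ] ℂ)} (hζ : BesselLike ζ)
    {e : ℕ → H} (he : Orthonormal ℂ e) :
    ∃ W : H →L[ℂ] (D →SL[starRingEnd ℂ] ℂ), ∀ n : ℕ, W (e n) = ζ n := by
  classical
  set c : H → ℕ → ℂ := fun x k => (inner ℂ (e k) x : ℂ) with hc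
  set u : H → ℕ → (D →SL[starRingEnd ℂ] ℂ) :=
    fun x N => ∑ k ∈ Finset.range N, c x k • ζ k with hu
  have hsum : ∀ x : H, Summable (fun k => ‖c x k‖ ^ 2) := fun x =>
    he.inner_products_summable x
  have hbes : ∀ (x : H) (s : Finset ℕ), ∑ k ∈ s, ‖c x k‖ ^ 2 ≤ ‖x‖ ^ 2 := fun x s =>
    he.sum_inner_products_le x
  have huapp : ∀ x N η, u x N η = ∑ k ∈ Finset.range N, c x k * ζ k η := by
    intro x N η
    simp [hu, ContinuousLinearMap.sum_apply, ContinuousLinearMap.smul_apply, smul_eq_mul]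
  -- the fundamental Cauchy–Schwarz type estimate
  have hCS : ∀ (x : H) (η : D) (s : Finset ℕ),
      ‖∑ k ∈ s, c x k * ζ k η‖ ≤
        Real.sqrt (∑ k ∈ s, ‖c x k‖ ^ 2) * Real.sqrt (∑ k ∈ s, ‖ζ k η‖ ^ 2) := by
    intro x η s
    calc ‖∑ k ∈ s, c x k * ζ k η‖ ≤ ∑ k ∈ s, ‖c x k‖ * ‖ζ k η‖ := by
          refine (norm_sum_le _ _).trans_eq ?_
          simp [norm_mul]
      _ ≤ _ := Real.sum_mul_le_sqrt_mul_sqrt _ _ _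
  have hcauchy : ∀ x : H, CauchySeq (u x) := by
    intro x
    apply cauchy_crit
    intro M hM ε hε
    obtain ⟨γ, hγ⟩ := hζ M hM
    set B : ℝ := Real.sqrt (max γ 0) + 1 with hB
    have hB0 : 0 < B := by positivity
    have hS : CauchySeq (fun N => ∑ k ∈ Finset.range N, ‖c x k‖ ^ 2) :=
      ((hsum x).hasSum.tendsto_sum_nat).cauchySeq
    obtain ⟨N, hN⟩ := Metric.cauchySeq_iff.mp hS ((ε / B) ^ 2) (by positivity)
    refine ⟨N, ?_⟩
    have key2 : ∀ a b : ℕ, N ≤ a → N ≤ b → a ≤ b → ∀ η ∈ M, ‖u x b η - u x a η‖ < ε := by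
      intro a b ha hb hab η hη
      have h1 : u x b η - u x a η = ∑ k ∈ Finset.Ico a b, c x k * ζ k η := by
        rw [huapp, huapp, eq_comm]
        exact Finset.sum_Ico_eq_sub _ hab
      rw [h1]
      have hIc : ∑ k ∈ Finset.Ico a b, ‖c x k‖ ^ 2 < (ε / B) ^ 2 := by
        have := hN b hb a ha
        rw [Real.dist_eq] at this
        have h2 : ∑ k ∈ Finset.Ico a b, ‖c x k‖ ^ 2 =
            (∑ k ∈ Finset.range b, ‖c x k‖ ^ 2) - ∑ k ∈ Finset.range a, ‖c x k‖ ^ 2 :=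
          Finset.sum_Ico_eq_sub _ hab
        rw [h2]
        exact lt_of_le_of_lt (le_abs_self _) this
      have hIz : ∑ k ∈ Finset.Ico a b, ‖ζ k η‖ ^ 2 ≤ max γ 0 := by
        refine le_trans ?_ (le_max_left _ _)
        refine le_trans (Finset.sum_le_sum_of_subset_of_nonneg ?_ ?_) (hγ η hη b)
        · intro k hk
          rw [Finset.mem_range]
          exact (Finset.mem_Ico.mp hk).2
        · intro k _ _
          positivity
      refine lt_of_le_of_lt (hCS x η _) ?_
      have hs1 : Real.sqrt (∑ k ∈ Finset.Ico a b, ‖c x k‖ ^ 2) < ε / B := by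
        have := Real.sqrt_lt_sqrt (by positivity) hIc
        rwa [Real.sqrt_sq (by positivity)] at this
      have hs2 : Real.sqrt (∑ k ∈ Finset.Ico a b, ‖ζ k η‖ ^ 2) ≤ B := by
        refine le_trans (Real.sqrt_le_sqrt hIz) ?_
        rw [hB]
        linarith [Real.sqrt_nonneg (max γ 0)]
      calc Real.sqrt (∑ k ∈ Finset.Ico a b, ‖c x k‖ ^ 2) *
            Real.sqrt (∑ k ∈ Finset.Ico a b, ‖ζ k η‖ ^ 2)
          ≤ Real.sqrt (∑ k ∈ Finset.Ico a b, ‖c x k‖ ^ 2) * B :=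
            mul_le_mul_of_nonneg_left hs2 (Real.sqrt_nonneg _)
        _ < (ε / B) * B := by
            exact mul_lt_mul_of_pos_right hs1 hB0
        _ = ε := div_mul_cancel₀ ε (ne_of_gt hB0)
    intro m hm n hn η hη
    rcases le_total n m with hle | hle
    · exact key2 n m hn hm hle η hη
    · rw [norm_sub_rev]
      exact key2 m n hm hn hle η hη
  choose L hL using fun x => hseqcompl (u x) (hcauchy x)
  have hpt : ∀ (x : H) (η : D), Tendsto (fun N => u x N η) atTop (𝓝 (L x η)) := fun x η =>
    ((continuous_eval_const η).tendsto (L x)).comp (hL x)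
  have hbound : ∀ M : Set D, IsVonNBounded ℂ M →
      ∃ C : ℝ, 0 ≤ C ∧ ∀ x : H, ∀ η ∈ M, ‖L x η‖ ≤ C * ‖x‖ := by
    intro M hM
    obtain ⟨γ, hγ⟩ := hζ M hM
    refine ⟨Real.sqrt (max γ 0), Real.sqrt_nonneg _, fun x η hη => ?_⟩
    refine le_of_tendsto (hpt x η).norm (Eventually.of_forall fun N => ?_)
    rw [huapp]
    refine le_trans (hCS x η _) ?_
    have hs1 : Real.sqrt (∑ k ∈ Finset.range N, ‖c x k‖ ^ 2) ≤ ‖x‖ := by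
      refine le_trans (Real.sqrt_le_sqrt (hbes x _)) ?_
      rw [Real.sqrt_sq (norm_nonneg x)]
    have hs2 : Real.sqrt (∑ k ∈ Finset.range N, ‖ζ k η‖ ^ 2) ≤ Real.sqrt (max γ 0) :=
      Real.sqrt_le_sqrt (le_trans (hγ η hη N) (le_max_left _ _))
    calc Real.sqrt (∑ k ∈ Finset.range N, ‖c x k‖ ^ 2) *
          Real.sqrt (∑ k ∈ Finset.range N, ‖ζ k η‖ ^ 2)
        ≤ ‖x‖ * Real.sqrt (max γ 0) :=
          mul_le_mul hs1 hs2 (Real.sqrt_nonneg _) (norm_nonneg x)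
      _ = Real.sqrt (max γ 0) * ‖x‖ := mul_comm _ _
  have hadd : ∀ x y : H, L (x + y) = L x + L y := by
    intro x y
    refine tendsto_nhds_unique (hL (x + y)) ?_
    have heq : u (x + y) = fun N => u x N + u y N := by
      funext N
      show ∑ k ∈ Finset.range N, (inner ℂ (e k) (x + y) : ℂ) • ζ k = _
      have hterm : ∀ k : ℕ, (inner ℂ (e k) (x + y) : ℂ) • ζ k =
          (inner ℂ (e k) x : ℂ) • ζ k + (inner ℂ (e k) y : ℂ) • ζ k := by
        intro k
        rw [inner_add_right]
        exact add_smul ((inner ℂ (e k) x : ℂ)) ((inner ℂ (e k) y : ℂ)) (ζ k)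
      rw [Finset.sum_congr rfl fun k _ => hterm k, Finset.sum_add_distrib]
    rw [heq]
    exact (hL x).add (hL y)
  have hsmul : ∀ (a : ℂ) (x : H), L (a • x) = a • L x := by
    intro a x
    refine tendsto_nhds_unique (hL (a • x)) ?_
    have heq : u (a • x) = fun N => a • u x N := by
      funext N
      show ∑ k ∈ Finset.range N, (inner ℂ (e k) (a • x) : ℂ) • ζ k = _
      have hterm : ∀ k : ℕ, (inner ℂ (e k) (a • x) : ℂ) • ζ k =
          a • ((inner ℂ (e k) x : ℂ) • ζ k) := by
        intro k
        rw [inner_smul_right]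
        exact (smul_smul a ((inner ℂ (e k) x : ℂ)) (ζ k)).symm
      rw [Finset.sum_congr rfl fun k _ => hterm k, ← Finset.smul_sum]
    rw [heq]
    exact (hL x).const_smul a
  set Wl : H →ₗ[ℂ] (D →SL[starRingEnd ℂ] ℂ) :=
    { toFun := L, map_add' := hadd, map_smul' := hsmul } with hWl
  have hcont : Continuous Wl := by
    apply continuous_of_continuousAt_zero Wl
    have h0 : Wl 0 = 0 := map_zero Wl
    rw [ContinuousAt, h0, dual_basis.tendsto_right_iff]
    rintro ⟨M, U⟩ ⟨hM, hU⟩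
    obtain ⟨C, hC0, hC⟩ := hbound M hM
    obtain ⟨ε, hε, hball⟩ := Metric.mem_nhds_iff.mp hU
    have hsmall : ∀ᶠ x : H in 𝓝 0, ‖x‖ < ε / (C + 1) := by
      filter_upwards [Metric.ball_mem_nhds (0 : H) (by positivity : (0:ℝ) < ε / (C + 1))]
        with x hx
      rwa [mem_ball_zero_iff] at hx
    filter_upwards [hsmall] with x hx
    intro η hη
    apply hball
    rw [mem_ball_zero_iff]
    calc ‖Wl x η‖ = ‖L x η‖ := rfl
      _ ≤ C * ‖x‖ := hC x η hη
      _ ≤ (C + 1) * ‖x‖ := mul_le_mul_of_nonneg_right (by linarith) (norm_nonneg x)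
      _ < (C + 1) * (ε / (C + 1)) := by
          exact mul_lt_mul_of_pos_left hx (by positivity)
      _ = ε := by field_simp
  refine ⟨⟨Wl, hcont⟩, fun n => ?_⟩
  have hev : ∀ N, n < N → u (e n) N = ζ n := by
    intro N hN
    rw [hu]
    simp only
    rw [Finset.sum_eq_single n]
    · have h1 : c (e n) n = 1 := by
        simp only [hc]
        simpa using (orthonormal_iff_ite.mp he n n)
      rw [h1]
      exact one_smul ℂ (ζ n)
    · intro k hk hkn
      have h0 : c (e n) k = 0 := by
        simp only [hc]
        simpa [hkn] using (orthonormal_iff_ite.mp he k n)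
      rw [h0]
      exact zero_smul ℂ (ζ k)
    · intro hmem
      exact absurd (Finset.mem_range.mpr hN) hmem
  have htend : Tendsto (u (e n)) atTop (𝓝 (ζ n)) := by
    refine tendsto_atTop_of_eventually_const (i₀ := n + 1) fun N hN => ?_
    exact hev N (Nat.lt_of_lt_of_le (Nat.lt_succ_self n) hN)
  exact tendsto_nhds_unique (hL (e n)) htend

private lemma reverse {H : Type*} [NormedAddCommGroup H] [InnerProductSpace ℂ H]
    [CompleteSpace H] {e : ℕ → H} (he : Orthonormal ℂ e)
    {ζ : ℕ → (D →SL[starRingEnd ℂ] ℂ)}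
    (W : H →L[ℂ] (D →SL[starRingEnd ℂ] ℂ)) (hW : ∀ n, W (e n) = ζ n) :
    BesselLike ζ := by
  intro M hM
  have hV : {f : D →SL[starRingEnd ℂ] ℂ | ∀ η ∈ M, f η ∈ Metric.closedBall (0:ℂ) 1} ∈
      𝓝 (0 : D →SL[starRingEnd ℂ] ℂ) :=
    dual_basis.mem_of_mem (i := (M, Metric.closedBall 0 1))
      ⟨hM, Metric.closedBall_mem_nhds _ one_pos⟩
  have hpre : W ⁻¹' {f : D →SL[starRingEnd ℂ] ℂ | ∀ η ∈ M, f η ∈ Metric.closedBall (0:ℂ) 1} ∈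
      𝓝 (0 : H) := by
    refine W.continuous.continuousAt.preimage_mem_nhds ?_
    rwa [map_zero]
  obtain ⟨r, hr, hball⟩ := Metric.mem_nhds_iff.mp hpre
  set C : ℝ := 2 / r with hCdef
  have hC0 : 0 ≤ C := by positivity
  have hC : ∀ x : H, ∀ η ∈ M, ‖W x η‖ ≤ C * ‖x‖ := by
    intro x η hη
    rcases eq_or_ne x 0 with rfl | hx
    · simp
    · have hxn : 0 < ‖x‖ := norm_pos_iff.mpr hx
      set a : ℝ := r / (2 * ‖x‖) with ha
      have ha0 : 0 < a := by positivity
      have hmem : (a : ℂ) • x ∈ Metric.ball (0 : H) r := by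
        rw [mem_ball_zero_iff, norm_smul, Complex.norm_real, Real.norm_eq_abs,
          abs_of_pos ha0]
        have hax : a * ‖x‖ = r / 2 := by
          rw [ha]; field_simp
        rw [hax]
        linarith
      have h1 : ‖W ((a : ℂ) • x) η‖ ≤ 1 := by
        have h2 := hball hmem η hη
        rwa [mem_closedBall_zero_iff] at h2
      rw [map_smul, ContinuousLinearMap.smul_apply, norm_smul, Complex.norm_real,
        Real.norm_eq_abs, abs_of_pos ha0] at h1
      have h3 : ‖W x η‖ ≤ 1 / a := by
        rw [le_div_iff₀ ha0, mul_comm]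
        exact h1
      have h4 : 1 / a = C * ‖x‖ := by
        rw [ha, hCdef]
        rw [one_div_div]
        ring
      rwa [h4] at h3
  refine ⟨C ^ 2, fun η hη N => ?_⟩
  have hφb : ∀ x : H, ‖W x η‖ ≤ C * ‖x‖ := fun x => hC x η hη
  set φl : H →ₗ[ℂ] ℂ :=
    { toFun := fun x => W x η
      map_add' := by intro a b; simp
      map_smul' := by intro s a; simp } with hφl
  set φ : H →L[ℂ] ℂ := LinearMap.mkContinuous φl C hφb with hφ
  have hφn : ‖φ‖ ≤ C := LinearMap.mkContinuous_norm_le _ hC0 _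
  set v : H := (InnerProductSpace.toDual ℂ H).symm φ with hv
  have hvx : ∀ x : H, (inner ℂ v x : ℂ) = φ x := fun x => InnerProductSpace.toDual_symm_apply
  have hvn : ‖v‖ ≤ C := by
    rw [hv]
    rw [LinearIsometryEquiv.norm_map]
    exact hφn
  have hz : ∀ k, ζ k η = (inner ℂ v (e k) : ℂ) := by
    intro k
    rw [hvx]
    show ζ k η = W (e k) η
    rw [hW k]
  calc ∑ k ∈ Finset.range N, ‖ζ k η‖ ^ 2
      = ∑ k ∈ Finset.range N, ‖(inner ℂ (e k) v : ℂ)‖ ^ 2 := by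
        refine Finset.sum_congr rfl fun k _ => ?_
        rw [hz k, norm_inner_symm]
    _ ≤ ‖v‖ ^ 2 := he.sum_inner_products_le v
    _ ≤ C ^ 2 := by nlinarith [norm_nonneg v]

end Aux

private lemma exists_onbasis {H : Type*} [NormedAddCommGroup H] [InnerProductSpace ℂ H]
    [CompleteSpace H] [TopologicalSpace.SeparableSpace H]
    (hinfdim : ¬ FiniteDimensional ℂ H) : ∃ e : ℕ → H, IsONBasisSeq e := by
  obtain ⟨w, b, hb⟩ := exists_hilbertBasis ℂ H
  have horth : Orthonormal ℂ ((↑) : w → H) := hb ▸ b.orthonormal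
  have hdense : Dense ((Submodule.span ℂ w : Submodule ℂ H) : Set H) := by
    have h1 := Submodule.dense_iff_topologicalClosure_eq_top.mpr b.dense_span
    rwa [hb, Subtype.range_coe] at h1
  -- countability
  have hcw : w.Countable := by
    obtain ⟨s, hsc, hsd⟩ := TopologicalSpace.exists_countable_dense H
    have hch : ∀ x : w, ∃ z : s, dist (x : H) (z : H) < 1 / 2 := by
      intro x
      obtain ⟨z, hz1, hz2⟩ := Metric.dense_iff.mp hsd (x : H) (1 / 2) (by norm_num)
      refine ⟨⟨z, hz2⟩, ?_⟩
      rw [Metric.mem_ball] at hz1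
      simpa [dist_comm] using hz1
    choose f hf using hch
    have hinj : Function.Injective f := by
      intro x y hxy
      by_contra hne
      have hinner : (inner ℂ (x : H) (y : H) : ℂ) = 0 := horth.2 hne
      have hnx : ‖(x : H)‖ = 1 := horth.1 x
      have hny : ‖(y : H)‖ = 1 := horth.1 y
      have h2 : ‖(x : H) - (y : H)‖ ^ 2 = 2 := by
        rw [@norm_sub_sq ℂ, hinner, hnx, hny]
        norm_num
      have hd1 : dist (x : H) ((f x : H)) < 1 / 2 := hf x
      have hd2 : dist ((f x : H)) (y : H) < 1 / 2 := by
        rw [hxy, dist_comm]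
        exact hf y
      have hlt : dist (x : H) (y : H) < 1 := by
        have := dist_triangle (x : H) ((f x : H)) (y : H)
        linarith
      rw [dist_eq_norm] at hlt
      nlinarith [norm_nonneg ((x : H) - (y : H))]
    have : Countable ↥s := hsc.to_subtype
    have : Countable ↥w := hinj.countable
    exact Set.countable_coe_iff.mp this
  -- infiniteness
  have hwi : w.Infinite := by
    by_contra hfin
    rw [Set.not_infinite] at hfin
    have hfd : FiniteDimensional ℂ (Submodule.span ℂ w) :=
      FiniteDimensional.span_of_finite ℂ hfin
    have hclosed : IsClosed ((Submodule.span ℂ w : Submodule ℂ H) : Set H) :=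
      Submodule.closed_of_finiteDimensional _
    have huniv : ((Submodule.span ℂ w : Submodule ℂ H) : Set H) = Set.univ := by
      rw [← hclosed.closure_eq]
      exact hdense.closure_eq
    have htop : (Submodule.span ℂ w : Submodule ℂ H) = ⊤ := by
      apply Submodule.eq_top_iff'.mpr
      intro x
      have : x ∈ ((Submodule.span ℂ w : Submodule ℂ H) : Set H) := by
        rw [huniv]; trivial
      exact this
    have : FiniteDimensional ℂ H := by
      rw [htop] at hfd
      exact (Submodule.topEquiv (R := ℂ) (M := H)).finiteDimensional
    exact hinfdim this
  have hcw' : Countable ↥w := hcw.to_subtype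
  have hwi' : Infinite ↥w := hwi.to_subtype
  obtain ⟨d⟩ := nonempty_denumerable ↥w
  let φ : ℕ ≃ w := (Denumerable.eqv ↥w).symm
  refine ⟨fun n => ((φ n : H)), ?_, ?_⟩
  · exact horth.comp φ φ.injective
  · have hrange : Set.range (fun n => ((φ n : H))) = w := by
      have : (fun n => ((φ n : H))) = Subtype.val ∘ φ := rfl
      rw [this, Set.range_comp, Equiv.range_eq_univ, Set.image_univ, Subtype.range_val]
    rw [hrange]
    exact hdense

/-- Proposition 2.11 (`prop_211`) of Bellomonte–Trapani: assume the strong conjugate dual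
`D^×[t^×]` is sequentially complete and `H` is an infinite-dimensional separable complex
Hilbert space. A sequence `ζ ⊂ D^×` is Bessel-like if and only if, for every orthonormal basis
`(e_n)` of `H`, there exists a continuous linear map `W : H → D^×[t^×]` with `W e_n = ζ_n`. -/
theorem statement7 {D H : Type*} [AddCommGroup D] [Module ℂ D] [Module ℝ D] [IsScalarTower ℝ ℂ D]
    [TopologicalSpace D] [IsTopologicalAddGroup D] [ContinuousSMul ℂ D] [T2Space D]
    [LocallyConvexSpace ℝ D]
    [NormedAddCommGroup H] [InnerProductSpace ℂ H] [CompleteSpace H]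
    [TopologicalSpace.SeparableSpace H] (hinfdim : ¬ FiniteDimensional ℂ H)
    (hseqcompl : ∀ u : ℕ → (D →SL[starRingEnd ℂ] ℂ), CauchySeq u → ∃ L, Tendsto u atTop (𝓝 L))
    (ζ : ℕ → (D →SL[starRingEnd ℂ] ℂ)) :
    BesselLike ζ ↔
      ∀ e : ℕ → H, IsONBasisSeq e →
        ∃ W : H →L[ℂ] (D →SL[starRingEnd ℂ] ℂ), ∀ n : ℕ, W (e n) = ζ n := by
  constructor
  · intro hζ e he
    exact forward hseqcompl hζ he.1
  · intro h
    obtain ⟨e, he⟩ := exists_onbasis hinfdim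
    obtain ⟨W, hW⟩ := h e he
    exact reverse he.1 W hW
end
end

section
/- If (ξ_n)_{n≥1} ⊂ D is a Riesz-Fischer-like sequence, then for every (a_n)_{n≥1} ∈ ℓ² there exists a continuous conjugate-linear functional Φ ∈ D^× such that Φ(ξ_n) = a_n for every n ≥ 1 (in particular Σ_{k=1}^∞ |Φ(ξ_k)|² < ∞); that is, the analysis operator V : {Φ ∈ D^× : Σ_k |Φ(ξ_k)|² < ∞} → ℓ², VΦ := (Φ(ξ_k))_{k≥1}, is surjective. -/
open Filter Topology

noncomputable section

/-- A sequence `ξ ⊂ D` is Riesz-Fischer-like (w.r.t. the Hilbert space `H`) if for every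
orthonormal basis `(e_n)` of `H` there is a continuous linear map `S : D → H` with
`S ξ_n = e_n` for all `n`. -/
def RieszFischerLike (H : Type*) [NormedAddCommGroup H] [InnerProductSpace ℂ H]
    {D : Type*} [AddCommGroup D] [Module ℂ D] [TopologicalSpace D] (ξ : ℕ → D) : Prop :=
  ∀ e : ℕ → H, IsONBasisSeq e → ∃ S : D →L[ℂ] H, ∀ n : ℕ, S (ξ n) = e n

/-- Proposition 2.14 of Bellomonte–Trapani: if `ξ ⊂ D` is a Riesz-Fischer-like sequence, then
for every `(a_n) ∈ ℓ²` there is a continuous conjugate-linear functional `Φ ∈ D^×` with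
`Φ (ξ n) = a n` for all `n` (in particular `Σ_k |Φ (ξ k)|² < ∞`); i.e. the analysis operator
`V : {Φ ∈ D^× : Σ_k |Φ(ξ_k)|² < ∞} → ℓ²`, `V Φ = (Φ (ξ k))_k`, is surjective. -/
theorem statement8 {D H : Type*} [AddCommGroup D] [Module ℂ D] [Module ℝ D] [IsScalarTower ℝ ℂ D]
    [TopologicalSpace D] [IsTopologicalAddGroup D] [ContinuousSMul ℂ D] [T2Space D]
    [LocallyConvexSpace ℝ D]
    [NormedAddCommGroup H] [InnerProductSpace ℂ H] [CompleteSpace H]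
    [TopologicalSpace.SeparableSpace H] (hinfdim : ¬ FiniteDimensional ℂ H)
    (ξ : ℕ → D) (hRF : RieszFischerLike H ξ) :
    ∀ a : ℕ → ℂ, (Summable fun n => ‖a n‖ ^ 2) →
      ∃ Φ : D →SL[starRingEnd ℂ] ℂ,
        (∀ n : ℕ, Φ (ξ n) = a n) ∧ (Summable fun k => ‖Φ (ξ k)‖ ^ 2) := by
  intro a ha
  obtain ⟨w, b, hb⟩ := exists_hilbertBasis ℂ H
  have hortho : Orthonormal ℂ ((↑) : w → H) := hb ▸ b.orthonormal
  have hdense : Dense ((Submodule.span ℂ w : Submodule ℂ H) : Set H) := by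
    have := b.dense_span
    rw [hb, Subtype.range_coe] at this
    exact Submodule.dense_iff_topologicalClosure_eq_top.mpr this
  -- w is countable
  have hcount : Countable w := by
    have hd : Pairwise (Function.onFun Disjoint fun x : w => Metric.ball (x : H) (1 / 2)) := by
      intro x y hxy
      refine Metric.ball_disjoint_ball ?_
      have h0 : (inner ℂ (x : H) (y : H) : ℂ) = 0 := hortho.2 hxy
      have h1 : ‖(x : H)‖ = 1 := hortho.1 x
      have h2 : ‖(y : H)‖ = 1 := hortho.1 y
      have hsq : dist (x : H) (y : H) ^ 2 = 2 := by
        rw [dist_eq_norm, @norm_sub_sq ℂ, h0, h1, h2]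
        norm_num
      have h3 : (0:ℝ) ≤ dist (x : H) (y : H) := dist_nonneg
      nlinarith
    exact hd.countable_of_isOpen_disjoint (fun _ => Metric.isOpen_ball)
      (fun _ => Metric.nonempty_ball.2 (by norm_num))
  -- w is infinite
  have hwfin : ¬ w.Finite := by
    intro hfin
    apply hinfdim
    have hfd : FiniteDimensional ℂ (Submodule.span ℂ w) :=
      FiniteDimensional.span_of_finite ℂ hfin
    have hclosed : IsClosed ((Submodule.span ℂ w : Submodule ℂ H) : Set H) :=
      (Submodule.span ℂ w).closed_of_finiteDimensional
    have htop : Submodule.span ℂ w = ⊤ :=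
      SetLike.coe_injective (by rw [← hclosed.closure_eq, hdense.closure_eq, Submodule.top_coe])
    rw [htop] at hfd
    exact (Submodule.topEquiv (R := ℂ) (M := H)).finiteDimensional
  have hinf : Infinite w := Set.infinite_coe_iff.mpr hwfin
  obtain ⟨den⟩ := nonempty_denumerable w
  set eqv : w ≃ ℕ := Denumerable.eqv w with heqv
  set e : ℕ → H := fun n => ((eqv.symm n : w) : H) with he
  have heortho : Orthonormal ℂ e := hortho.comp _ eqv.symm.injective
  have hrange : Set.range e = w := by
    rw [he]
    have : Set.range (fun n => ((eqv.symm n : w) : H)) =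
        Set.range ((↑) : w → H) := (Equiv.surjective eqv.symm).range_comp _
    rw [this, Subtype.range_coe]
  have hdense' : Dense ((Submodule.span ℂ (Set.range e) : Submodule ℂ H) : Set H) := by
    rwa [hrange]
  set b' : HilbertBasis ℕ ℂ H :=
    HilbertBasis.mk heortho
      (le_of_eq (Submodule.dense_iff_topologicalClosure_eq_top.mp hdense').symm) with hb'
  have hb'coe : ⇑b' = e := HilbertBasis.coe_mk _ _
  obtain ⟨S, hS⟩ := hRF e ⟨heortho, hdense'⟩
  have hmem : Memℓp a 2 := memℓp_gen (by simpa using ha)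
  set h : H := b'.repr.symm ⟨a, hmem⟩ with hh
  have hrepr : ∀ n, b'.repr h n = a n := by
    intro n
    rw [hh, LinearIsometryEquiv.apply_symm_apply]
  have key : ∀ n, ((innerSLFlip ℂ h).comp S) (ξ n) = a n := by
    intro n
    have : ((innerSLFlip ℂ h).comp S) (ξ n) = (inner ℂ (e n) h : ℂ) := by
      simp [ContinuousLinearMap.comp_apply, hS n]
    rw [this, ← hb'coe, ← b'.repr_apply_apply, hrepr]
  refine ⟨(innerSLFlip ℂ h).comp S, key, ?_⟩
  have : (fun k => ‖((innerSLFlip ℂ h).comp S) (ξ k)‖ ^ 2) = fun k => ‖a k‖ ^ 2 := by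
    funext k; rw [key k]
  rw [this]
  exact ha
end
end

section
/- Let (ζ_n)_{n≥1} be a sequence in D^×. If (ζ_n) possesses a biorthogonal sequence (ξ_n)_{n≥1} ⊂ D (i.e. ζ_n(ξ_k) = δ_{nk} for all n,k) whose linear span is dense in D[t] and which is Riesz-Fischer-like, then (ζ_n) is a Bessel-like sequence. -/
open Filter Topology

noncomputable section

/-- Proposition 2.16 of Bellomonte–Trapani: if a sequence `ζ ⊂ D^×` possesses a biorthogonal
sequence `ξ ⊂ D` which is total (dense linear span in `D[t]`) and Riesz-Fischer-like, then `ζ`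
is a Bessel-like sequence. -/
theorem statement10 {D H : Type*} [AddCommGroup D] [Module ℂ D] [Module ℝ D] [IsScalarTower ℝ ℂ D]
    [TopologicalSpace D] [IsTopologicalAddGroup D] [ContinuousSMul ℂ D] [T2Space D]
    [LocallyConvexSpace ℝ D]
    [NormedAddCommGroup H] [InnerProductSpace ℂ H] [CompleteSpace H]
    [TopologicalSpace.SeparableSpace H] (hinfdim : ¬ FiniteDimensional ℂ H)
    (ζ : ℕ → (D →SL[starRingEnd ℂ] ℂ)) (ξ : ℕ → D)
    (hbio : ∀ n k : ℕ, ζ n (ξ k) = if n = k then 1 else 0)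
    (htotal : Dense ((Submodule.span ℂ (Set.range ξ) : Submodule ℂ D) : Set D))
    (hRF : RieszFischerLike H ξ) :
    BesselLike ζ := by
  classical
  obtain ⟨w, b, hb⟩ := exists_hilbertBasis ℂ H
  have hortho : Orthonormal ℂ ((↑) : w → H) := hb ▸ b.orthonormal
  have hspan : Dense ((Submodule.span ℂ w : Submodule ℂ H) : Set H) := by
    have := b.dense_span
    rw [hb, Subtype.range_coe] at this
    exact Submodule.dense_iff_topologicalClosure_eq_top.mpr this
  -- w is countable
  have hdist : ∀ i j : w, i ≠ j → (1.4 : ℝ) ≤ dist (i : H) (j : H) := by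
    intro i j hij
    have h1 : ‖(i : H)‖ = 1 := hortho.1 i
    have h2 : ‖(j : H)‖ = 1 := hortho.1 j
    have h0 : (inner ℂ (i : H) (j : H) : ℂ) = 0 := hortho.2 hij
    have hsq : dist (i : H) (j : H) ^ 2 = 2 := by
      rw [dist_eq_norm, @norm_sub_sq ℂ, h0, h1, h2]
      norm_num
    nlinarith [dist_nonneg (x := (i : H)) (y := (j : H))]
  haveI hcw : Countable w := by
    refine Pairwise.countable_of_isOpen_disjoint
      (s := fun i : w => Metric.ball (i : H) 0.7) ?_ (fun i => Metric.isOpen_ball)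
      (fun i => Metric.nonempty_ball.2 (by norm_num))
    intro i j hij
    refine Set.disjoint_left.2 fun z hzi hzj => ?_
    have := hdist i j hij
    have h1 : dist z (i : H) < 0.7 := hzi
    have h2 : dist z (j : H) < 0.7 := hzj
    have := dist_triangle (i : H) z (j : H)
    rw [dist_comm (i : H) z] at this
    linarith
  -- w is infinite
  haveI hiw : Infinite w := by
    refine Set.infinite_coe_iff.mpr fun hfin => ?_
    haveI : FiniteDimensional ℂ (Submodule.span ℂ w) :=
      FiniteDimensional.span_of_finite ℂ hfin
    have hcl : IsClosed ((Submodule.span ℂ w : Submodule ℂ H) : Set H) :=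
      Submodule.closed_of_finiteDimensional _
    have htop : (Submodule.span ℂ w : Submodule ℂ H) = ⊤ := by
      have h1 : ((Submodule.span ℂ w : Submodule ℂ H) : Set H) = Set.univ := by
        rw [← hcl.closure_eq, hspan.closure_eq]
      exact SetLike.ext' (by simpa using h1)
    haveI : FiniteDimensional ℂ (⊤ : Submodule ℂ H) :=
      htop ▸ ‹FiniteDimensional ℂ (Submodule.span ℂ w)›
    exact hinfdim (Submodule.topEquiv (R := ℂ) (M := H)).finiteDimensional
  obtain ⟨dw⟩ := nonempty_denumerable ↥w
  haveI := dw
  -- an ℕ-indexed orthonormal basis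
  set e : ℕ → H := fun n => ((Denumerable.eqv w).symm n : H) with he_def
  have heON : IsONBasisSeq e := by
    constructor
    · exact hortho.comp _ (Denumerable.eqv w).symm.injective
    · have hre : Set.range e = w := by
        ext x
        constructor
        · rintro ⟨n, rfl⟩; exact ((Denumerable.eqv w).symm n).2
        · intro hx; exact ⟨Denumerable.eqv w ⟨x, hx⟩, by simp [he_def]⟩
      rwa [hre]
  obtain ⟨S, hS⟩ := hRF e heON
  -- identify ζ k with inner products
  have hζ : ∀ k : ℕ, ∀ η : D, ζ k η = inner ℂ (S η) (e k) := by
    intro k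
    have hc1 : Continuous fun η : D => (ζ k) η := (ζ k).continuous
    have hc2 : Continuous fun η : D => (inner ℂ (S η) (e k) : ℂ) :=
      S.continuous.inner continuous_const
    have := Continuous.ext_on htotal hc1 hc2 ?_
    · exact fun η => congrFun this η
    intro x hx
    have hx' : x ∈ Submodule.span ℂ (Set.range ξ) := hx
    refine Submodule.span_induction ?_ ?_ ?_ ?_ hx'
    · rintro _ ⟨m, rfl⟩
      have hinner : (inner ℂ (e m) (e k) : ℂ) = if m = k then 1 else 0 := by
        rcases heON with ⟨hON, -⟩
        rw [orthonormal_iff_ite] at hON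
        exact hON m k
      simp only [hS, hbio, hinner]
      simp [eq_comm]
    · simp
    · intro x y _ _ hx hy
      simp only [map_add, inner_add_left, hx, hy]
    · intro c x _ hx
      simp only [map_smulₛₗ, map_smul, inner_smul_left, hx]
      rfl
  -- main argument
  intro M hM
  obtain ⟨r, hr'⟩ := (NormedSpace.isVonNBounded_iff' (𝕜 := ℂ)).mp (hM.image S)
  have hr : ∀ η ∈ M, ‖S η‖ ≤ r := fun η hη => hr' (S η) ⟨η, hη, rfl⟩
  refine ⟨r ^ 2, fun η hη N => ?_⟩
  calc ∑ k ∈ Finset.range N, ‖ζ k η‖ ^ 2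
      = ∑ k ∈ Finset.range N, ‖(inner ℂ (e k) (S η) : ℂ)‖ ^ 2 := by
        refine Finset.sum_congr rfl fun k _ => ?_
        rw [hζ k η, norm_inner_symm]
    _ ≤ ‖S η‖ ^ 2 := heON.1.sum_inner_products_le (S η)
    _ ≤ r ^ 2 := by
        have h1 : ‖S η‖ ≤ r := hr η hη
        have h2 : (0 : ℝ) ≤ ‖S η‖ := norm_nonneg _
        nlinarith
end
end

section
/- Let (ξ_n)_{n≥1} be a Riesz-like basis of D, with injective continuous linear T : D[t] → H such that e_n := Tξ_n form an orthonormal basis of H, and let (ζ_n)_{n≥1} ⊂ D^× be the dual sequence of the Schauder basis (ξ_n). Then: (i) ζ_n(f) = ⟪Tf, e_n⟫ for every f ∈ D and n ≥ 1; (ii) Σ_{n=1}^∞ |ζ_n(f)|² = ‖Tf‖² for every f ∈ D; (iii) (ζ_n) is a Bessel-like sequence. -/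
open Filter Topology

noncomputable section

/-- `ξ` is a Schauder basis with (continuous) coefficient functionals `c`. -/
def IsSchauderBasis {E : Type*} [AddCommGroup E] [Module ℂ E] [TopologicalSpace E]
    (ξ : ℕ → E) (c : ℕ → (E →L[ℂ] ℂ)) : Prop :=
  ∀ f : E, SeriesTendsTo (fun n => c n f • ξ n) f ∧
    ∀ a : ℕ → ℂ, SeriesTendsTo (fun n => a n • ξ n) f → ∀ n, a n = c n f

/-- Section 3.1 of Bellomonte–Trapani: if `ξ` is a Riesz-like basis of `D`, i.e. a Schauder
basis mapped by an injective continuous linear `T : D → H` to an orthonormal basis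
`e n = T (ξ n)` of `H`, and `ζ` is the dual sequence of `ξ`, then (i) `ζ n f = ⟪T f, e n⟫`,
(ii) `Σ_n |ζ n f|² = ‖T f‖²` for every `f ∈ D`, and (iii) `ζ` is Bessel-like. -/
theorem statement12 {D H : Type*} [AddCommGroup D] [Module ℂ D] [Module ℝ D] [IsScalarTower ℝ ℂ D]
    [TopologicalSpace D] [IsTopologicalAddGroup D] [ContinuousSMul ℂ D] [T2Space D]
    [LocallyConvexSpace ℝ D]
    [NormedAddCommGroup H] [InnerProductSpace ℂ H] [CompleteSpace H]
    [TopologicalSpace.SeparableSpace H] (hinfdim : ¬ FiniteDimensional ℂ H)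
    (ξ : ℕ → D) (c : ℕ → (D →L[ℂ] ℂ)) (hbasis : IsSchauderBasis ξ c)
    (T : D →L[ℂ] H) (hinj : Function.Injective T)
    (honb : IsONBasisSeq (fun n => T (ξ n)))
    (ζ : ℕ → (D →SL[starRingEnd ℂ] ℂ)) (hζ : ∀ (n : ℕ) (f : D), ζ n f = starRingEnd ℂ (c n f)) :
    (∀ (n : ℕ) (f : D), ζ n f = (inner ℂ (T f) (T (ξ n)) : ℂ)) ∧
    (∀ f : D, HasSum (fun n => ‖ζ n f‖ ^ 2) (‖T f‖ ^ 2)) ∧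
    BesselLike ζ := by
  have key : ∀ (n : ℕ) (f : D), ζ n f = (inner ℂ (T f) (T (ξ n)) : ℂ) := by
    intro n f
    obtain ⟨hconv, -⟩ := hbasis f
    have h1 : Tendsto (fun N => ∑ k ∈ Finset.range N, c k f • T (ξ k)) atTop (𝓝 (T f)) := by
      have := (T.continuous.tendsto f).comp hconv
      simpa [Function.comp_def, map_sum, map_smul] using this
    have h2 : Tendsto
        (fun N => (inner ℂ (∑ k ∈ Finset.range N, c k f • T (ξ k)) (T (ξ n)) : ℂ))
        atTop (𝓝 (inner ℂ (T f) (T (ξ n)))) :=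
      h1.inner tendsto_const_nhds
    have horth := orthonormal_iff_ite.mp honb.1
    have h3 : ∀ᶠ N in atTop,
        (inner ℂ (∑ k ∈ Finset.range N, c k f • T (ξ k)) (T (ξ n)) : ℂ)
          = starRingEnd ℂ (c n f) := by
      filter_upwards [eventually_ge_atTop (n + 1)] with N hN
      rw [sum_inner, Finset.sum_eq_single n]
      · simp [inner_smul_left, horth n n, (honb.1.1 n : ‖T (ξ n)‖ = 1)]
      · intro k _ hk
        simp [inner_smul_left, horth k n, hk]
      · intro hn
        exact absurd (Finset.mem_range.mpr (Nat.lt_of_succ_le hN)) hn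
    have := tendsto_nhds_unique (h2.congr' h3) tendsto_const_nhds
    rw [hζ n f, this]
  have hsum : ∀ f : D, HasSum (fun n => ‖ζ n f‖ ^ 2) (‖T f‖ ^ 2) := by
    intro f
    have hsp : ⊤ ≤ (Submodule.span ℂ (Set.range (fun n => T (ξ n)))).topologicalClosure :=
      (Submodule.dense_iff_topologicalClosure_eq_top.mp honb.2).ge
    let b : HilbertBasis ℕ ℂ H := HilbertBasis.mk honb.1 hsp
    have hb : ∀ n, b n = T (ξ n) := fun n => congrFun (HilbertBasis.coe_mk honb.1 hsp) n
    have hs := b.hasSum_inner_mul_inner (T f) (T f)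
    have hre := Complex.reCLM.hasSum hs
    have heq : (fun n => Complex.reCLM ((inner ℂ (T f) (b n) : ℂ) * inner ℂ (b n) (T f)))
        = fun n => ‖ζ n f‖ ^ 2 := by
      funext n
      have hz : (inner ℂ (T f) (b n) : ℂ) = ζ n f := by rw [hb n, key n f]
      have hz2 : (inner ℂ (b n) (T f) : ℂ) = starRingEnd ℂ (ζ n f) := by
        rw [← inner_conj_symm, hb n, key n f]
      rw [hz, hz2, Complex.mul_conj]
      simp [Complex.normSq_eq_norm_sq, ← Complex.ofReal_pow]
    rw [heq] at hre
    have hn : Complex.reCLM (inner ℂ (T f) (T f) : ℂ) = ‖T f‖ ^ 2 := by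
      simpa using inner_self_eq_norm_sq (𝕜 := ℂ) (T f)
    rwa [hn] at hre
  refine ⟨key, hsum, ?_⟩
  intro M hM
  have hTM : Bornology.IsVonNBounded ℂ (T '' M) := hM.image T
  obtain ⟨r, hr⟩ := (NormedSpace.isVonNBounded_iff' ℂ).mp hTM
  refine ⟨r ^ 2, fun η hη N => ?_⟩
  have h1 : ∑ k ∈ Finset.range N, ‖ζ k η‖ ^ 2 ≤ ‖T η‖ ^ 2 :=
    sum_le_hasSum _ (fun k _ => by positivity) (hsum η)
  have h2 : ‖T η‖ ≤ r := hr (T η) ⟨η, hη, rfl⟩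
  have h3 : ‖T η‖ ^ 2 ≤ r ^ 2 := by
    have := norm_nonneg (T η); nlinarith
  linarith
end
end

section
/- Let (ξ_n)_{n≥1} be a Riesz-like basis of D, with injective continuous linear T : D[t] → H such that (Tξ_n)_{n≥1} is an orthonormal basis of H. Then for Ψ ∈ D^× the following are equivalent: (a) Σ_{k=1}^∞ |Ψ(ξ_k)|² < ∞; (b) there exists h ∈ H such that Ψ(f) = ⟪Tf, h⟫ for every f ∈ D. (That is, the range of the extended adjoint T^† on H coincides with {Ψ ∈ D^× : Σ_k |Ψ(ξ_k)|² < ∞}.) -/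
open Filter Topology

noncomputable section

/-- Equation (3.2) (`eq_range`) of Bellomonte–Trapani: if `ξ` is a Riesz-like basis of `D`
(a Schauder basis mapped by the injective continuous linear `T : D → H` onto an orthonormal
basis of `H`), then for `Ψ ∈ D^×`: `Σ_k |Ψ (ξ k)|² < ∞` if and only if there is `h ∈ H` with
`Ψ f = ⟪T f, h⟫` for all `f ∈ D` (i.e. `Ψ` lies in the range of the extension of `T^†`). -/
theorem statement13 {D H : Type*} [AddCommGroup D] [Module ℂ D] [Module ℝ D] [IsScalarTower ℝ ℂ D]
    [TopologicalSpace D] [IsTopologicalAddGroup D] [ContinuousSMul ℂ D] [T2Space D]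
    [LocallyConvexSpace ℝ D]
    [NormedAddCommGroup H] [InnerProductSpace ℂ H] [CompleteSpace H]
    [TopologicalSpace.SeparableSpace H] (hinfdim : ¬ FiniteDimensional ℂ H)
    (ξ : ℕ → D) (c : ℕ → (D →L[ℂ] ℂ)) (hbasis : IsSchauderBasis ξ c)
    (T : D →L[ℂ] H) (hinj : Function.Injective T)
    (honb : IsONBasisSeq (fun n => T (ξ n))) :
    ∀ Ψ : D →SL[starRingEnd ℂ] ℂ,
      (Summable fun k => ‖Ψ (ξ k)‖ ^ 2) ↔ ∃ h : H, ∀ f : D, Ψ f = (inner ℂ (T f) h : ℂ) := by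
  intro Ψ
  set e : ℕ → H := fun n => T (ξ n) with he
  have hon : Orthonormal ℂ e := honb.1
  constructor
  · intro hsum
    set a : ℕ → ℂ := fun k => Ψ (ξ k) with ha
    have hS : Summable fun k => a k • e k := by
      have := (hon.orthogonalFamily.summable_iff_norm_sq_summable a).mpr hsum
      simpa [LinearIsometry.toSpanSingleton_apply] using this
    obtain ⟨h, hh⟩ := hS
    refine ⟨h, fun f => ?_⟩
    have hcoef : ∀ n, (inner ℂ (e n) h : ℂ) = a n := by
      intro n
      have h1 : HasSum (fun k => (inner ℂ (e n) (a k • e k) : ℂ)) (inner ℂ (e n) h : ℂ) :=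
        hh.mapL (innerSL ℂ (e n))
      have h2 : HasSum (fun k => (inner ℂ (e n) (a k • e k) : ℂ)) (a n) := by
        have : (fun k => (inner ℂ (e n) (a k • e k) : ℂ)) =
            fun k => if k = n then a n else 0 := by
          funext k
          rw [inner_smul_right]
          rw [orthonormal_iff_ite.mp hon]
          rcases eq_or_ne k n with rfl | hk
          · simp
          · simp [Ne.symm hk, hk]
        rw [this]
        simpa using hasSum_ite_eq n (a n)
      exact h1.unique h2
    -- partial sums
    have hf := (hbasis f).1
    have h3 : Tendsto (fun N => (inner ℂ (T (∑ n ∈ Finset.range N, c n f • ξ n)) h : ℂ))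
        atTop (𝓝 (inner ℂ (T f) h : ℂ)) := by
      exact (((T.continuous.tendsto f).comp hf).inner tendsto_const_nhds)
    have h4 : Tendsto (fun N => Ψ (∑ n ∈ Finset.range N, c n f • ξ n))
        atTop (𝓝 (Ψ f)) := (Ψ.continuous.tendsto f).comp hf
    have heq : ∀ N, Ψ (∑ n ∈ Finset.range N, c n f • ξ n)
        = (inner ℂ (T (∑ n ∈ Finset.range N, c n f • ξ n)) h : ℂ) := by
      intro N
      rw [map_sum, map_sum, sum_inner]
      refine Finset.sum_congr rfl fun n _ => ?_
      rw [map_smulₛₗ, map_smulₛₗ, inner_smul_left, hcoef n]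
      simp [a]
    rw [funext heq] at h4
    exact tendsto_nhds_unique h4 h3
  · rintro ⟨h, hh⟩
    have : (fun k => ‖Ψ (ξ k)‖ ^ 2) = fun k => ‖(inner ℂ (e k) h : ℂ)‖ ^ 2 := by
      funext k; rw [hh]
    rw [this]
    exact hon.inner_products_summable h
end
end

section
/- Assume D is complete and the strong conjugate dual D^×[t^×] is complete (the paper assumes D complete and reflexive with D^× quasi-complete). Let (ξ_n)_{n≥1} be a topological basis of D and suppose there exists a sequence (ζ_n)_{n≥1} ⊂ D^× with ζ_n(ξ_k) = δ_{nk} for all n,k, such that Σ_{n=1}^∞ |ζ_n(f)|² < ∞ for every f ∈ D and the seminorm p_ζ(f) := (Σ_{n=1}^∞ |ζ_n(f)|²)^{1/2} is continuous on D[t]. Then there exists a continuous linear map S : D[t] → D^×[t^×] such that Sξ_n = ζ_n for every n ≥ 1 and (Sf)(f) ≥ 0 (real and nonnegative) for every f ∈ D; in particular (ξ_n) and (Sξ_n) are biorthogonal. -/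
open Filter Topology

noncomputable section

/-- `ξ` is a topological basis of `D`: every `f ∈ D` has a unique expansion `f = Σ a n • ξ n`
converging in `D`. -/
def IsTopBasisSeq {E : Type*} [AddCommGroup E] [Module ℂ E] [TopologicalSpace E]
    (ξ : ℕ → E) : Prop :=
  ∀ f : E, ∃! a : ℕ → ℂ, SeriesTendsTo (fun n => a n • ξ n) f

/-- Cauchy–Schwarz: summability of the product of two square-summable nonneg sequences. -/
lemma aux_summable_mul {a b : ℕ → ℝ} (ha0 : ∀ n, 0 ≤ a n) (hb0 : ∀ n, 0 ≤ b n)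
    (ha : Summable fun n => a n ^ 2) (hb : Summable fun n => b n ^ 2) :
    Summable fun n => a n * b n := by
  refine Summable.of_nonneg_of_le (fun n => mul_nonneg (ha0 n) (hb0 n))
    (fun n => ?_) (((ha.add hb).div_const 2))
  have := two_mul_le_add_sq (a n) (b n)
  nlinarith [this]

/-- Cauchy–Schwarz inequality for tsums. -/
lemma aux_tsum_mul_le {a b : ℕ → ℝ} (ha0 : ∀ n, 0 ≤ a n) (hb0 : ∀ n, 0 ≤ b n)
    (ha : Summable fun n => a n ^ 2) (hb : Summable fun n => b n ^ 2) :
    ∑' n, a n * b n ≤ Real.sqrt (∑' n, a n ^ 2) * Real.sqrt (∑' n, b n ^ 2) := by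
  refine Summable.tsum_le_of_sum_le (aux_summable_mul ha0 hb0 ha hb) (fun s => ?_)
  refine (Real.sum_mul_le_sqrt_mul_sqrt s a b).trans ?_
  have h1 : ∑ i ∈ s, a i ^ 2 ≤ ∑' n, a n ^ 2 := Summable.sum_le_tsum s (fun n _ => sq_nonneg _) ha
  have h2 : ∑ i ∈ s, b i ^ 2 ≤ ∑' n, b n ^ 2 := Summable.sum_le_tsum s (fun n _ => sq_nonneg _) hb
  exact mul_le_mul (Real.sqrt_le_sqrt h1) (Real.sqrt_le_sqrt h2) (Real.sqrt_nonneg _)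
    (Real.sqrt_nonneg _)

/-- Theorem 3.4, (ii) ⇒ (iii), of Bellomonte–Trapani: assume `D` complete and the strong
conjugate dual `D^×[t^×]` complete. If `ξ` is a topological basis of `D` and `ζ ⊂ D^×` is
biorthogonal to `ξ`, with `Σ_n |ζ n f|² < ∞` for all `f` and the seminorm
`p_ζ(f) = (Σ_n |ζ n f|²)^{1/2}` continuous on `D[t]`, then there is a continuous linear map
`S : D[t] → D^×[t^×]` with `S ξ_n = ζ_n` for all `n` and `(S f)(f) ≥ 0` (real, nonnegative)
for all `f ∈ D`; in particular `ξ` and `(S ξ_n)` are biorthogonal. -/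
theorem statement15 {D : Type*} [AddCommGroup D] [Module ℂ D] [Module ℝ D] [IsScalarTower ℝ ℂ D]
    [UniformSpace D] [IsUniformAddGroup D] [ContinuousSMul ℂ D] [T2Space D]
    [LocallyConvexSpace ℝ D] [CompleteSpace D]
    [CompleteSpace (D →SL[starRingEnd ℂ] ℂ)]
    (ξ : ℕ → D) (hbasis : IsTopBasisSeq ξ)
    (ζ : ℕ → (D →SL[starRingEnd ℂ] ℂ))
    (hbio : ∀ n k : ℕ, ζ n (ξ k) = if n = k then 1 else 0)
    (hsumm : ∀ f : D, Summable fun n => ‖ζ n f‖ ^ 2)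
    (hcont : Continuous fun f : D => Real.sqrt (∑' n, ‖ζ n f‖ ^ 2)) :
    ∃ S : D →L[ℂ] (D →SL[starRingEnd ℂ] ℂ),
      (∀ n : ℕ, S (ξ n) = ζ n) ∧
      (∀ f : D, 0 ≤ (S f f).re ∧ (S f f).im = 0) ∧
      (∀ n k : ℕ, S (ξ n) (ξ k) = if n = k then 1 else 0) := by
  classical
  set p : D → ℝ := fun f => Real.sqrt (∑' n, ‖ζ n f‖ ^ 2) with hp
  have hp0 : p 0 = 0 := by simp [hp]
  have hpnonneg : ∀ f, 0 ≤ p f := fun f => Real.sqrt_nonneg _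
  have hphom : ∀ (c : ℂ) (g : D), p (c • g) = ‖c‖ * p g := by
    intro c g
    have h1 : ∀ n, ‖ζ n (c • g)‖ ^ 2 = ‖c‖ ^ 2 * ‖ζ n g‖ ^ 2 := by
      intro n
      rw [map_smulₛₗ]
      simp [norm_smul, mul_pow]
    simp only [hp, h1, tsum_mul_left]
    rw [Real.sqrt_mul (sq_nonneg _), Real.sqrt_sq (norm_nonneg c)]
  -- summability of the products
  have hsmul : ∀ f g : D, Summable fun n => ‖ζ n f‖ * ‖ζ n g‖ := fun f g =>
    aux_summable_mul (fun n => norm_nonneg _) (fun n => norm_nonneg _) (hsumm f) (hsumm g)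
  have hs : ∀ f g : D, Summable fun n => (starRingEnd ℂ) (ζ n f) * ζ n g := by
    intro f g
    refine Summable.of_norm ?_
    have : ∀ n, ‖(starRingEnd ℂ) (ζ n f) * ζ n g‖ = ‖ζ n f‖ * ‖ζ n g‖ := by
      intro n; rw [norm_mul, RCLike.norm_conj]
    simpa [this] using hsmul f g
  set B : D → D → ℂ := fun f g => ∑' n, (starRingEnd ℂ) (ζ n f) * ζ n g with hB
  have hnormB : ∀ f g : D, ‖B f g‖ ≤ p f * p g := by
    intro f g
    refine (norm_tsum_le_tsum_norm ?_).trans ?_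
    · have : ∀ n, ‖(starRingEnd ℂ) (ζ n f) * ζ n g‖ = ‖ζ n f‖ * ‖ζ n g‖ := by
        intro n; rw [norm_mul, RCLike.norm_conj]
      simpa [this] using hsmul f g
    · calc ∑' n, ‖(starRingEnd ℂ) (ζ n f) * ζ n g‖ = ∑' n, ‖ζ n f‖ * ‖ζ n g‖ := by
            congr 1; funext n; rw [norm_mul, RCLike.norm_conj]
        _ ≤ p f * p g := aux_tsum_mul_le (fun n => norm_nonneg _) (fun n => norm_nonneg _)
            (hsumm f) (hsumm g)
  -- the conjugate-linear functional T f
  have hBadd : ∀ f g g' : D, B f (g + g') = B f g + B f g' := by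
    intro f g g'
    have : ∀ n, (starRingEnd ℂ) (ζ n f) * ζ n (g + g')
        = (starRingEnd ℂ) (ζ n f) * ζ n g + (starRingEnd ℂ) (ζ n f) * ζ n g' := by
      intro n; rw [map_add]; ring
    rw [hB]; simp only [this]
    exact Summable.tsum_add (hs f g) (hs f g')
  have hBsmul : ∀ (f : D) (c : ℂ) (g : D), B f (c • g) = (starRingEnd ℂ) c * B f g := by
    intro f c g
    have : ∀ n, (starRingEnd ℂ) (ζ n f) * ζ n (c • g)
        = (starRingEnd ℂ) c * ((starRingEnd ℂ) (ζ n f) * ζ n g) := by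
      intro n; rw [map_smulₛₗ]; simp [smul_eq_mul]; ring
    rw [hB]; simp only [this]
    exact tsum_mul_left
  have hTlin : ∀ f : D, ∃ T : D →ₛₗ[starRingEnd ℂ] ℂ, ∀ g, T g = B f g := by
    intro f
    exact ⟨{ toFun := B f, map_add' := hBadd f, map_smul' := fun c g => hBsmul f c g },
      fun g => rfl⟩
  have hTcont : ∀ (T : D →ₛₗ[starRingEnd ℂ] ℂ) (f : D), (∀ g, T g = B f g) → Continuous T := by
    intro T f hT
    refine continuous_of_continuousAt_zero T ?_
    have hT0 : T 0 = 0 := map_zero T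
    rw [ContinuousAt, hT0]
    have hb : Tendsto (fun g : D => p f * p g) (𝓝 0) (𝓝 0) := by
      have := (hcont.tendsto 0).const_mul (p f)
      rw [← hp0]
      simpa [hp] using this
    refine squeeze_zero_norm (fun g => ?_) hb
    rw [hT]; exact hnormB f g
  choose T hTB using hTlin
  set Tc : D → (D →SL[starRingEnd ℂ] ℂ) := fun f => ⟨T f, hTcont (T f) f (hTB f)⟩ with hTc
  have hTcB : ∀ f g, Tc f g = B f g := fun f g => hTB f g
  -- linearity in f
  have hSadd : ∀ f f' : D, Tc (f + f') = Tc f + Tc f' := by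
    intro f f'
    ext g
    have : ∀ n, (starRingEnd ℂ) (ζ n (f + f')) * ζ n g
        = (starRingEnd ℂ) (ζ n f) * ζ n g + (starRingEnd ℂ) (ζ n f') * ζ n g := by
      intro n; rw [map_add, map_add]; ring
    simp only [ContinuousLinearMap.add_apply, hTcB, hB, this]
    exact Summable.tsum_add (hs f g) (hs f' g)
  have hSsmul : ∀ (c : ℂ) (f : D), Tc (c • f) = c • Tc f := by
    intro c f
    ext g
    have : ∀ n, (starRingEnd ℂ) (ζ n (c • f)) * ζ n g
        = c * ((starRingEnd ℂ) (ζ n f) * ζ n g) := by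
      intro n; rw [map_smulₛₗ]; simp [smul_eq_mul]; ring
    simp only [ContinuousLinearMap.smul_apply, hTcB, hB, this, smul_eq_mul]
    exact tsum_mul_left
  set Slin : D →ₗ[ℂ] (D →SL[starRingEnd ℂ] ℂ) :=
    { toFun := Tc, map_add' := hSadd, map_smul' := hSsmul } with hSlin
  -- continuity of S
  have hScont : Continuous Slin := by
    refine continuous_of_continuousAt_zero Slin ?_
    rw [ContinuousAt, map_zero]
    rw [(ContinuousLinearMap.hasBasis_nhds_zero (𝕜₁ := ℂ) (𝕜₂ := ℂ) (σ := starRingEnd ℂ)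
      (E := D) (F := ℂ)).tendsto_right_iff]
    rintro ⟨Bs, V⟩ ⟨hBs, hV⟩
    obtain ⟨ε, hε, hball⟩ := Metric.mem_nhds_iff.1 hV
    -- bound p on Bs
    have hU : (p ⁻¹' Set.Iio 1) ∈ 𝓝 (0 : D) := by
      refine (isOpen_Iio.preimage hcont).mem_nhds ?_
      simp [Set.mem_preimage, hp0]
    obtain ⟨c, hc1, hcB⟩ := ((eventually_cobounded_le_norm (1 : ℝ)).and (hBs hU)).exists
    have hMpos : (0 : ℝ) < ‖c‖ := lt_of_lt_of_le one_pos hc1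
    set M := ‖c‖ with hM
    have hpB : ∀ g ∈ Bs, p g ≤ M := by
      intro g hg
      obtain ⟨u, hu, rfl⟩ := hcB hg
      rw [hphom]
      calc ‖c‖ * p u ≤ ‖c‖ * 1 := by
            have : p u < 1 := hu
            exact mul_le_mul_of_nonneg_left this.le (norm_nonneg c)
        _ = M := by rw [mul_one]
    -- the neighborhood of 0 in D
    have hW : (p ⁻¹' Set.Iio (ε / (M + 1))) ∈ 𝓝 (0 : D) := by
      refine (isOpen_Iio.preimage hcont).mem_nhds ?_
      simp only [Set.mem_preimage, hp0, Set.mem_Iio]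
      positivity
    refine Filter.mem_of_superset hW ?_
    intro f hf g hg
    refine hball ?_
    rw [Metric.mem_ball, dist_zero_right]
    have h1 : ‖Slin f g‖ ≤ p f * p g := by
      have e : Slin f g = B f g := hTcB f g
      rw [e]; exact hnormB f g
    have h2 : p f * p g ≤ p f * (M + 1) := by
      have := (hpB g hg).trans (le_add_of_nonneg_right zero_le_one)
      exact mul_le_mul_of_nonneg_left this (hpnonneg f)
    have h3 : p f * (M + 1) < ε := by
      have hf' : p f < ε / (M + 1) := hf
      have hM1 : (0 : ℝ) < M + 1 := by positivity
      calc p f * (M + 1) < (ε / (M + 1)) * (M + 1) := by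
            exact mul_lt_mul_of_pos_right hf' hM1
        _ = ε := div_mul_cancel₀ ε hM1.ne'
    exact lt_of_le_of_lt h1 (lt_of_le_of_lt h2 h3)
  set S : D →L[ℂ] (D →SL[starRingEnd ℂ] ℂ) := ⟨Slin, hScont⟩ with hS
  have hSB : ∀ f g, S f g = B f g := fun f g => hTcB f g
  have hSxi : ∀ n : ℕ, S (ξ n) = ζ n := by
    intro n
    ext g
    rw [hSB, hB]
    refine tsum_eq_single n (fun k hk => ?_) |>.trans ?_
    · rw [hbio k n, if_neg hk]; simp
    · rw [hbio n n, if_pos rfl]; simp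
  refine ⟨S, hSxi, ?_, ?_⟩
  · intro f
    have hterm : ∀ n, (starRingEnd ℂ) (ζ n f) * ζ n f = ((‖ζ n f‖ ^ 2 : ℝ) : ℂ) := by
      intro n
      rw [← Complex.normSq_eq_conj_mul_self, Complex.normSq_eq_norm_sq]
    have hSff : S f f = ((∑' n, ‖ζ n f‖ ^ 2 : ℝ) : ℂ) := by
      rw [hSB, hB]
      simp only [hterm]
      rw [Complex.ofReal_tsum]
    constructor
    · rw [hSff, Complex.ofReal_re]
      exact tsum_nonneg fun n => sq_nonneg _
    · rw [hSff, Complex.ofReal_im]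
  · intro n k
    rw [hSxi n]
    exact hbio n k
end
end

section
/- Assume D is barreled (the paper assumes D complete and reflexive; reflexive locally convex spaces are barreled). Let (ξ_n)_{n≥1} be a topological basis of D and suppose there exists a continuous linear map S : D[t] → D^×[t^×] such that (Sξ_n)(ξ_k) = δ_{nk} for all n,k ≥ 1. Then (ξ_n) is a Riesz-like basis: there exists an injective continuous linear map T : D[t] → H such that (Tξ_n)_{n≥1} is an orthonormal basis of H; moreover, if f = Σ_{k=1}^∞ a_k ξ_k ∈ D then (Sf)(f) = Σ_{k=1}^∞ |a_k|² and ‖Tf‖² = Σ_{k=1}^∞ |a_k|². -/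
open Filter Topology

noncomputable section

/-- Theorem 3.4, (iii) ⇒ (i), of Bellomonte–Trapani: assume `D` barreled. If `ξ` is a
topological basis of `D` and there exists a continuous linear `S : D[t] → D^×[t^×]` with
`(S ξ_n)(ξ_k) = δ_{nk}`, then `ξ` is a Riesz-like basis: there exists an injective continuous
linear `T : D[t] → H` such that `(T ξ_n)` is an orthonormal basis of `H`; moreover, if
`f = Σ_k a_k ξ_k ∈ D` then `(S f)(f) = Σ_k |a_k|²` and `‖T f‖² = Σ_k |a_k|²`. -/
theorem statement16 {D H : Type*} [AddCommGroup D] [Module ℂ D] [Module ℝ D] [IsScalarTower ℝ ℂ D]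
    [TopologicalSpace D] [IsTopologicalAddGroup D] [ContinuousSMul ℂ D] [T2Space D]
    [LocallyConvexSpace ℝ D] [BarrelledSpace ℂ D]
    [NormedAddCommGroup H] [InnerProductSpace ℂ H] [CompleteSpace H]
    [TopologicalSpace.SeparableSpace H] (hinfdim : ¬ FiniteDimensional ℂ H)
    (ξ : ℕ → D) (hbasis : IsTopBasisSeq ξ)
    (S : D →L[ℂ] (D →SL[starRingEnd ℂ] ℂ))
    (hbio : ∀ n k : ℕ, S (ξ n) (ξ k) = if n = k then 1 else 0) :
    ∃ T : D →L[ℂ] H, Function.Injective T ∧ IsONBasisSeq (fun n => T (ξ n)) ∧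
      ∀ (f : D) (a : ℕ → ℂ), SeriesTendsTo (fun n => a n • ξ n) f →
        HasSum (fun k => ‖a k‖ ^ 2) (‖T f‖ ^ 2) ∧ S f f = ((‖T f‖ ^ 2 : ℝ) : ℂ) := by
  classical
  -- coefficient functionals are continuous
  have heval : ∀ k : ℕ, Continuous fun f : D => S f (ξ k) := fun k =>
    (continuous_eval_const (ξ k)).comp S.continuous
  let φ : ℕ → (D →L[ℂ] ℂ) := fun k =>
    { toFun := fun f => S f (ξ k)
      map_add' := fun f g => by simp
      map_smul' := fun c f => by simp
      cont := heval k }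
  -- identification of coefficients
  have hcoef : ∀ (f : D) (a : ℕ → ℂ), SeriesTendsTo (fun n => a n • ξ n) f →
      ∀ k, a k = S f (ξ k) := by
    intro f a hfa k
    have h1 : Tendsto (fun N => S (∑ n ∈ Finset.range N, a n • ξ n) (ξ k)) atTop
        (𝓝 (S f (ξ k))) := ((heval k).tendsto f).comp hfa
    have h2 : ∀ N, k < N → S (∑ n ∈ Finset.range N, a n • ξ n) (ξ k) = a k := by
      intro N hN
      have : S (∑ n ∈ Finset.range N, a n • ξ n) (ξ k)
          = ∑ n ∈ Finset.range N, if n = k then a n else 0 := by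
        rw [map_sum, ContinuousLinearMap.sum_apply]
        refine Finset.sum_congr rfl fun n _ => ?_
        rw [map_smul, ContinuousLinearMap.smul_apply, hbio, smul_eq_mul]
        simp [mul_ite]
      rw [this, Finset.sum_ite_eq' (Finset.range N) k a]
      simp [Finset.mem_range.mpr hN]
    have h3 : Tendsto (fun _ : ℕ => a k) atTop (𝓝 (S f (ξ k))) := by
      refine h1.congr' ?_
      filter_upwards [eventually_gt_atTop k] with N hN using h2 N hN
    exact tendsto_nhds_unique tendsto_const_nhds h3
  -- the quadratic form computation
  have hsum : ∀ (f : D) (a : ℕ → ℂ), SeriesTendsTo (fun n => a n • ξ n) f →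
      HasSum (fun k => ‖a k‖ ^ 2) ((S f f).re) ∧ S f f = (((S f f).re : ℝ) : ℂ) := by
    intro f a hfa
    have ha : ∀ k, a k = S f (ξ k) := hcoef f a hfa
    have h1 : Tendsto (fun N => S f (∑ n ∈ Finset.range N, a n • ξ n)) atTop (𝓝 (S f f)) :=
      ((S f).continuous.tendsto f).comp hfa
    have h2 : ∀ N, S f (∑ n ∈ Finset.range N, a n • ξ n)
        = ((∑ n ∈ Finset.range N, ‖a n‖ ^ 2 : ℝ) : ℂ) := by
      intro N
      rw [map_sum]
      push_cast
      refine Finset.sum_congr rfl fun n _ => ?_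
      rw [map_smulₛₗ, ← ha n, smul_eq_mul, RCLike.conj_mul]
      norm_num
    have h1' : Tendsto (fun N => ((∑ n ∈ Finset.range N, ‖a n‖ ^ 2 : ℝ) : ℂ)) atTop
        (𝓝 (S f f)) := by
      refine h1.congr fun N => ?_
      rw [h2]
    have h3 : Tendsto (fun N => (∑ n ∈ Finset.range N, ‖a n‖ ^ 2 : ℝ)) atTop
        (𝓝 ((S f f).re)) := by
      refine ((Complex.continuous_re.tendsto (S f f)).comp h1').congr fun N => ?_
      simp [Function.comp, ← Complex.ofReal_pow, Complex.ofReal_re]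
    refine ⟨(hasSum_iff_tendsto_nat_of_nonneg (fun i => by positivity) _).mpr h3, ?_⟩
    have h4 : Tendsto (fun N => ((∑ n ∈ Finset.range N, ‖a n‖ ^ 2 : ℝ) : ℂ)) atTop
        (𝓝 (((S f f).re : ℝ) : ℂ)) := (Complex.continuous_ofReal.tendsto _).comp h3
    exact tendsto_nhds_unique h1' h4
  -- construct a ℕ-indexed Hilbert basis of H
  obtain ⟨w, b0, hb0⟩ := exists_hilbertBasis ℂ H
  have hwo : Orthonormal ℂ ((↑) : w → H) := hb0 ▸ b0.orthonormal
  have hwdist : ∀ x ∈ w, ∀ y ∈ w, x ≠ y → (1 : ℝ) ≤ dist x y := by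
    intro x hx y hy hxy
    have hxy' : (⟨x, hx⟩ : w) ≠ ⟨y, hy⟩ := fun h => hxy (congrArg Subtype.val h)
    have hnx : ‖x‖ = 1 := hwo.1 ⟨x, hx⟩
    have hny : ‖y‖ = 1 := hwo.1 ⟨y, hy⟩
    have hin : inner (𝕜 := ℂ) x y = 0 := hwo.2 hxy'
    have h2 : ‖x - y‖ ^ 2 = 2 := by
      rw [@norm_sub_sq ℂ]
      rw [hin, hnx, hny]
      simp
      norm_num
    rw [dist_eq_norm]
    nlinarith [norm_nonneg (x - y)]
  have hwc : w.Countable := by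
    refine Set.PairwiseDisjoint.countable_of_isOpen
      (s := fun x : H => Metric.ball x (1/2)) ?_ (fun x _ => Metric.isOpen_ball)
      (fun x _ => ⟨x, by simp⟩)
    intro x hx y hy hxy
    exact Metric.ball_disjoint_ball (by linarith [hwdist x hx y hy hxy])
  have hwi : w.Infinite := by
    intro hfin
    apply hinfdim
    haveI : FiniteDimensional ℂ (Submodule.span ℂ w) :=
      FiniteDimensional.span_of_finite ℂ hfin
    have hcl : (Submodule.span ℂ w).topologicalClosure = Submodule.span ℂ w :=
      (Submodule.span ℂ w).closed_of_finiteDimensional.submodule_topologicalClosure_eq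
    have hd : (Submodule.span ℂ (Set.range ⇑b0)).topologicalClosure = ⊤ := b0.dense_span
    rw [hb0, Subtype.range_coe] at hd
    rw [hcl] at hd
    haveI : FiniteDimensional ℂ (⊤ : Submodule ℂ H) := hd ▸ this
    exact Submodule.topEquiv.finiteDimensional
  haveI : Countable w := hwc.to_subtype
  haveI : Infinite w := hwi.to_subtype
  obtain ⟨e⟩ : Nonempty (ℕ ≃ w) := nonempty_equiv_of_countable
  set v : ℕ → H := fun n => (e n : H) with hv_def
  have hv : Orthonormal ℂ v := hwo.comp e e.injective
  have hvr : Set.range v = w := by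
    have : Set.range v = ((↑) : w → H) '' Set.range e := by
      rw [← Set.range_comp]; rfl
    rw [this, e.range_eq_univ, Set.image_univ, Subtype.range_coe]
  have hsp : ⊤ ≤ (Submodule.span ℂ (Set.range v)).topologicalClosure := by
    have hd : (Submodule.span ℂ (Set.range ⇑b0)).topologicalClosure = ⊤ := b0.dense_span
    rw [hb0, Subtype.range_coe] at hd
    rw [hvr, hd]
  let b : HilbertBasis ℕ ℂ H := HilbertBasis.mk hv hsp
  have hb : ⇑b = v := HilbertBasis.coe_mk hv hsp
  -- ℓ² membership of the coefficient sequence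
  have hmem : ∀ f : D, Memℓp (fun k => S f (ξ k)) 2 := by
    intro f
    obtain ⟨a, hfa, -⟩ := hbasis f
    have ha : ∀ k, a k = S f (ξ k) := hcoef f a hfa
    have hs : Summable fun k => ‖S f (ξ k)‖ ^ 2 := by
      refine (hsum f a hfa).1.summable.congr fun k => ?_
      rw [ha k]
    apply memℓp_gen
    have h2 : ∀ x : ℝ, 0 ≤ x → x ^ ((2 : ENNReal).toReal) = x ^ 2 := fun x hx => by
      rw [show (2 : ENNReal).toReal = ((2 : ℕ) : ℝ) by norm_num, Real.rpow_natCast]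
    exact hs.congr fun k => (h2 _ (norm_nonneg _)).symm
  let c : D → (lp (fun _ : ℕ => ℂ) 2) := fun f => ⟨fun k => S f (ξ k), hmem f⟩
  have hck : ∀ (f : D) (k : ℕ), c f k = S f (ξ k) := fun f k => rfl
  let T0 : D → H := fun f => b.repr.symm (c f)
  have hT0norm : ∀ f : D, ‖T0 f‖ ^ 2 = ∑' k, ‖S f (ξ k)‖ ^ 2 := by
    intro f
    have h1 : ‖T0 f‖ = ‖c f‖ := b.repr.symm.norm_map (c f)
    have h2 : ‖c f‖ ^ ((2 : ENNReal).toReal) = ∑' k, ‖c f k‖ ^ ((2 : ENNReal).toReal) :=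
      lp.norm_rpow_eq_tsum (by norm_num) (c f)
    have hr : ∀ x : ℝ, 0 ≤ x → x ^ ((2 : ENNReal).toReal) = x ^ 2 := fun x hx => by
      rw [show (2 : ENNReal).toReal = ((2 : ℕ) : ℝ) by norm_num, Real.rpow_natCast]
    rw [h1, ← hr _ (norm_nonneg _), h2]
    exact tsum_congr fun k => hr _ (norm_nonneg _)
  -- the key norm identity
  have hkey : ∀ (f : D) (a : ℕ → ℂ), SeriesTendsTo (fun n => a n • ξ n) f →
      HasSum (fun k => ‖a k‖ ^ 2) (‖T0 f‖ ^ 2) ∧ S f f = ((‖T0 f‖ ^ 2 : ℝ) : ℂ) := by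
    intro f a hfa
    obtain ⟨hH, hre⟩ := hsum f a hfa
    have ha : ∀ k, a k = S f (ξ k) := hcoef f a hfa
    have hnorm : ‖T0 f‖ ^ 2 = (S f f).re := by
      rw [hT0norm f]
      have : (fun k => ‖S f (ξ k)‖ ^ 2) = fun k => ‖a k‖ ^ 2 := funext fun k => by rw [ha k]
      rw [this, hH.tsum_eq]
    rw [hnorm]
    exact ⟨hH, hre⟩
  -- linearity
  have hc_add : ∀ f g : D, c (f + g) = c f + c g := by
    intro f g; apply lp.ext; funext k
    simp only [lp.coeFn_add, Pi.add_apply, hck]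
    rw [map_add, ContinuousLinearMap.add_apply]
  have hc_smul : ∀ (r : ℂ) (f : D), c (r • f) = r • c f := by
    intro r f; apply lp.ext; funext k
    simp only [lp.coeFn_smul, Pi.smul_apply, hck]
    rw [map_smul, ContinuousLinearMap.smul_apply]
  -- continuity via Banach–Steinhaus (barrelledness)
  letI : UniformSpace D := IsTopologicalAddGroup.rightUniformSpace D
  haveI : IsUniformAddGroup D := isUniformAddGroup_of_addCommGroup
  have hTsum : ∀ f : D, HasSum (fun k => S f (ξ k) • b k) (T0 f) := by
    intro f
    simpa using b.hasSum_repr_symm (c f)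
  let P : ℕ → (D →L[ℂ] H) := fun N => ∑ k ∈ Finset.range N, (φ k).smulRight (b k)
  have hP : Tendsto (fun N (f : D) => P N f) atTop (𝓝 T0) := by
    rw [tendsto_pi_nhds]
    intro f
    have := (hTsum f).tendsto_sum_nat
    refine this.congr fun N => ?_
    simp [P, ContinuousLinearMap.sum_apply, ContinuousLinearMap.smulRight_apply, φ]
  let T : D →L[ℂ] H := (norm_withSeminorms ℂ H).continuousLinearMapOfTendsto P hP
  have hTapp : ∀ f : D, T f = T0 f := fun f => rfl
  refine ⟨T, ?_, ?_, ?_⟩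
  · -- injectivity
    rw [injective_iff_map_eq_zero]
    intro f hf0
    have hcf : c f = 0 := by
      apply b.repr.symm.injective
      rw [map_zero]
      exact (hTapp f).symm.trans hf0
    have hco : ∀ k, S f (ξ k) = 0 := by
      intro k
      have := congrFun (congrArg (Subtype.val) hcf) k
      simpa [hck] using this
    obtain ⟨a, hfa, -⟩ := hbasis f
    have ha : ∀ k, a k = 0 := fun k => by rw [hcoef f a hfa k, hco k]
    have : Tendsto (fun N => ∑ n ∈ Finset.range N, a n • ξ n) atTop (𝓝 (0 : D)) := by
      refine tendsto_const_nhds.congr fun N => ?_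
      simp [ha]
    exact tendsto_nhds_unique hfa this
  · -- orthonormal basis
    have hTξ : (fun n => T (ξ n)) = ⇑b := by
      funext n
      rw [hTapp]
      have hcξ : c (ξ n) = lp.single 2 n 1 := by
        apply lp.ext; funext k
        rw [hck, hbio n k, lp.single_apply]
        rcases eq_or_ne k n with h | h
        · subst h; simp
        · simp [h, Ne.symm h]
      show b.repr.symm (c (ξ n)) = b n
      rw [hcξ, ← HilbertBasis.repr_self b n, LinearIsometryEquiv.symm_apply_apply]
    rw [hTξ]
    constructor
    · exact b.orthonormal
    · rw [dense_iff_closure_eq, ← Submodule.topologicalClosure_coe, b.dense_span]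
      simp
  · intro f a hfa
    have := hkey f a hfa
    rw [hTapp]
    exact this
end
end
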